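/- Let H₁ and H₂ be finite-dimensional complex inner product spaces and V : H₁ → H₂ a linear isometry. Let 𝒢 be a set of unitary operators on H₂ that is projectively dense in the unitary group of H₂: for every unitary W on H₂ and every ε > 0 there exist g ∈ 𝒢 and c ∈ ℂ with |c| = 1 such that ‖c·g − W‖ < ε in operator norm. Then for every unitary U on H₁ and every ε > 0 there exist g ∈ 𝒢 and c ∈ ℂ with |c| = 1 such that ‖V† ∘ (c·g) ∘ V − U‖ < ε in operator norm, where V† is the adjoint of V. -/

import Mathlib

open ContinuousLinearMap

set_option maxHeartbeats 1000000 in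
/-- Let `H₁`, `H₂` be finite-dimensional complex inner product spaces and
`V : H₁ → H₂` a linear isometry. Let `𝒢` be a set of unitary operators on `H₂` that is
projectively dense in the unitary group of `H₂`. Then for every unitary `U` on `H₁` and
every `ε > 0` there are `g ∈ 𝒢` and a phase `c` with `‖V† ∘ (c • g) ∘ V - U‖ < ε`. -/
theorem stmt11 {H₁ H₂ : Type*}
    [NormedAddCommGroup H₁] [InnerProductSpace ℂ H₁] [FiniteDimensional ℂ H₁]
    [NormedAddCommGroup H₂] [InnerProductSpace ℂ H₂] [FiniteDimensional ℂ H₂]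
    (V : H₁ →L[ℂ] H₂) (hV : ∀ x, ‖V x‖ = ‖x‖)
    (𝒢 : Set (H₂ →L[ℂ] H₂))
    (h𝒢 : ∀ g ∈ 𝒢, adjoint g ∘L g = 1 ∧ g ∘L adjoint g = 1)
    (hdense : ∀ W : H₂ →L[ℂ] H₂, adjoint W ∘L W = 1 → W ∘L adjoint W = 1 →
      ∀ ε > 0, ∃ g ∈ 𝒢, ∃ c : ℂ, ‖c‖ = 1 ∧ ‖c • g - W‖ < ε) :
    ∀ U : H₁ →L[ℂ] H₁, adjoint U ∘L U = 1 → U ∘L adjoint U = 1 →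
      ∀ ε > 0, ∃ g ∈ 𝒢, ∃ c : ℂ, ‖c‖ = 1 ∧
        ‖adjoint V ∘L ((c • g) ∘L V) - U‖ < ε := by
  intro U hU1 hU2 ε hε
  -- V is an isometry, so adjoint V ∘L V = 1
  have isom : H₁ →ₗᵢ[ℂ] H₂ := ⟨V.toLinearMap, hV⟩
  have hinner : ∀ x y : H₁, (inner ℂ (V x) (V y) : ℂ) = inner ℂ x y := fun x y =>
    (⟨V.toLinearMap, hV⟩ : H₁ →ₗᵢ[ℂ] H₂).inner_map_map x y
  have hVV : adjoint V ∘L V = 1 := by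
    ext x
    apply ext_inner_right ℂ
    intro y
    simp only [comp_apply, one_apply, adjoint_inner_left]
    exact hinner x y
  set p : H₂ →L[ℂ] H₂ := V ∘L adjoint V with hp
  set q : H₂ →L[ℂ] H₂ := V ∘L (U ∘L adjoint V) with hq
  set q' : H₂ →L[ℂ] H₂ := V ∘L (adjoint U ∘L adjoint V) with hq'
  -- basic relations
  have hpp : p * p = p := by
    show p ∘L p = p
    rw [hp, comp_assoc, ← comp_assoc (adjoint V) V (adjoint V), hVV, one_def, id_comp]
  have hpq : p * q = q := by
    show p ∘L q = q
    rw [hp, hq, comp_assoc, ← comp_assoc (adjoint V) V _, hVV, one_def, id_comp]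
  have hqp : q * p = q := by
    show q ∘L p = q
    rw [hp, hq, comp_assoc, comp_assoc, ← comp_assoc (adjoint V) V _, hVV, one_def, id_comp]
  have hpq' : p * q' = q' := by
    show p ∘L q' = q'
    rw [hp, hq', comp_assoc, ← comp_assoc (adjoint V) V _, hVV, one_def, id_comp]
  have hq'p : q' * p = q' := by
    show q' ∘L p = q'
    rw [hp, hq', comp_assoc, comp_assoc, ← comp_assoc (adjoint V) V _, hVV, one_def, id_comp]
  have hq'q : q' * q = p := by
    show q' ∘L q = p
    rw [hq, hq', comp_assoc, comp_assoc, ← comp_assoc (adjoint V) V _, hVV, one_def, id_comp,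
      ← comp_assoc (adjoint U) U _, hU1, one_def, id_comp]
  have hqq' : q * q' = p := by
    show q ∘L q' = p
    rw [hq, hq', comp_assoc, comp_assoc, ← comp_assoc (adjoint V) V _, hVV, one_def, id_comp,
      ← comp_assoc U (adjoint U) _, hU2, one_def, id_comp]
  set W : H₂ →L[ℂ] H₂ := q + (1 - p) with hW
  have hadjp : adjoint p = p := by rw [hp, adjoint_comp, adjoint_adjoint]
  have hadjq : adjoint q = q' := by
    rw [hq, hq', adjoint_comp, adjoint_comp, adjoint_adjoint, comp_assoc]
  have hadjW : adjoint W = q' + (1 - p) := by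
    rw [hW, ← star_eq_adjoint, star_add, star_sub, star_one, star_eq_adjoint, star_eq_adjoint,
      hadjp, hadjq]
  have hWunit1 : adjoint W ∘L W = 1 := by
    show adjoint W * W = 1
    rw [hadjW, hW]
    have expand : (q' + (1 - p)) * (q + (1 - p)) =
        q' * q + (q' - q' * p) + ((q - p * q) + (1 - p - p + p * p)) := by noncomm_ring
    rw [expand, hq'q, hq'p, hpq, hpp]
    abel
  have hWunit2 : W ∘L adjoint W = 1 := by
    show W * adjoint W = 1
    rw [hadjW, hW]
    have expand : (q + (1 - p)) * (q' + (1 - p)) =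
        q * q' + (q - q * p) + ((q' - p * q') + (1 - p - p + p * p)) := by noncomm_ring
    rw [expand, hqq', hqp, hpq', hpp]
    abel
  -- compression of W gives back U
  have hVVx : ∀ x, adjoint V (V x) = x := fun x => congrFun (congrArg DFunLike.coe hVV) x
  have hWVU : adjoint V ∘L (W ∘L V) = U := by
    ext x
    simp [hW, hq, hp, hVVx]
  obtain ⟨g, hg, c, hc, hlt⟩ := hdense W hWunit1 hWunit2 ε hε
  refine ⟨g, hg, c, hc, ?_⟩
  have key : adjoint V ∘L ((c • g) ∘L V) - U = adjoint V ∘L ((c • g - W) ∘L V) := by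
    rw [sub_comp, comp_sub, hWVU]
  rw [key]
  have hVle : ‖V‖ ≤ 1 := V.opNorm_le_bound zero_le_one (fun x => by rw [hV, one_mul])
  have hadjVle : ‖adjoint V‖ ≤ 1 := by
    rw [LinearIsometryEquiv.norm_map adjoint V]; exact hVle
  calc ‖adjoint V ∘L ((c • g - W) ∘L V)‖
      ≤ ‖adjoint V‖ * ‖(c • g - W) ∘L V‖ := opNorm_comp_le _ _
    _ ≤ ‖adjoint V‖ * (‖c • g - W‖ * ‖V‖) := by
        gcongr; exact opNorm_comp_le _ _
    _ ≤ 1 * (‖c • g - W‖ * 1) := by gcongr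
    _ = ‖c • g - W‖ := by ring
    _ < ε := hlt
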